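/- Every set partition of {1,…,n} arises as the set of piles of the Patience Sorting pile configuration of some permutation; consequently, the number of distinct pile configurations R(σ) as σ ranges over S_n equals the n-th Bell number B_n. -/

import Mathlib

/-- One step of Patience Sorting: place card `c` on the leftmost pile whose top
(head) is larger than `c`, or start a new pile on the right.  Piles are stored
top-first, so each pile is an increasing list whose head is the top (smallest) card. -/
def PSinsert (c : ℕ) : List (List ℕ) → List (List ℕ)
  | [] => [[c]]
  | [] :: ps => [] :: PSinsert c ps
  | (x :: p) :: ps =>
      if c < x then (c :: x :: p) :: ps else (x :: p) :: PSinsert c ps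

/-- The pile configuration `R(w)` produced by Patience Sorting applied to the word `w`. -/
def PSpiles (w : List ℕ) : List (List ℕ) :=
  w.foldl (fun ps c => PSinsert c ps) []

/-- The one-line word (with values `1,…,n`) of a permutation of `Fin n`. -/
def permWord {n : ℕ} (σ : Equiv.Perm (Fin n)) : List ℕ :=
  List.ofFn fun i => (σ i : ℕ) + 1

/-- Lemma A : all tops smaller than `c` → new pile at the right. -/
lemma PSinsert_new (c : ℕ) : ∀ ps : List (List ℕ),
    (∀ p ∈ ps, ∃ x q, p = x :: q ∧ x < c) → PSinsert c ps = ps ++ [[c]]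
  | [], _ => rfl
  | [] :: ps, h => by
      obtain ⟨x, q, hxq, -⟩ := h [] (by simp); simp at hxq
  | (y :: p) :: ps, h => by
      obtain ⟨x, q, hxq, hx⟩ := h (y :: p) (by simp)
      obtain ⟨rfl, rfl⟩ : y = x ∧ p = q := by simpa using hxq
      rw [PSinsert, if_neg (by omega), PSinsert_new c ps (fun p hp => h p (by simp [hp]))]
      simp

/-- Lemma B : `c` lands on the first pile whose top exceeds it. -/
lemma PSinsert_place (c x : ℕ) (p : List ℕ) (ps : List (List ℕ)) :
    ∀ qs : List (List ℕ), (∀ q ∈ qs, ∃ y r, q = y :: r ∧ y < c) → c < x →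
    PSinsert c (qs ++ (x :: p) :: ps) = qs ++ (c :: x :: p) :: ps
  | [], _, hx => by simp [PSinsert, if_pos hx]
  | [] :: qs, h, hx => by
      obtain ⟨y, r, hyr, -⟩ := h [] (by simp); simp at hyr
  | (z :: q) :: qs, h, hx => by
      obtain ⟨y, r, hyr, hy⟩ := h (z :: q) (by simp)
      obtain ⟨rfl, rfl⟩ : z = y ∧ q = r := by simpa using hyr
      rw [List.cons_append, PSinsert, if_neg (by omega),
        PSinsert_place c x p ps qs (fun q hq => h q (by simp [hq])) hx]
      simp

/-- Lemma D : inserting a strictly decreasing run all below `y`, all above the tops of `ps`. -/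
lemma foldl_run : ∀ (l : List ℕ) (ps : List (List ℕ)) (y : ℕ) (q : List ℕ),
    (∀ p ∈ ps, ∃ z r, p = z :: r ∧ ∀ a ∈ l, z < a) →
    l.Pairwise (· > ·) → (∀ a ∈ l, a < y) →
    List.foldl (fun ps c => PSinsert c ps) (ps ++ [y :: q]) l
      = ps ++ [l.reverse ++ y :: q]
  | [], ps, y, q, _, _, _ => by simp
  | a :: l, ps, y, q, hps, hdesc, hy => by
      rw [List.foldl_cons,
        PSinsert_place a y q [] ps
          (fun p hp => by
            obtain ⟨z, r, hzr, hz⟩ := hps p hp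
            exact ⟨z, r, hzr, hz a (by simp)⟩)
          (hy a (by simp)),
        foldl_run l ps a (y :: q)
          (fun p hp => by
            obtain ⟨z, r, hzr, hz⟩ := hps p hp
            exact ⟨z, r, hzr, fun b hb => hz b (by simp [hb])⟩)
          (List.Pairwise.sublist (List.sublist_cons_self a l) hdesc)
          (fun b hb => (List.pairwise_cons.mp hdesc).1 b hb)]
      simp

/-- Lemma C : processing a whole decreasing block appends one new pile. -/
lemma foldl_block (d : List ℕ) (hd : d ≠ []) (hdesc : d.Pairwise (· > ·))
    (ps : List (List ℕ))
    (hps : ∀ p ∈ ps, ∃ z r, p = z :: r ∧ ∀ a ∈ d, z < a) :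
    List.foldl (fun ps c => PSinsert c ps) ps d = ps ++ [d.reverse] := by
  obtain ⟨b, rest, rfl⟩ := List.exists_cons_of_ne_nil hd
  rw [List.foldl_cons,
    PSinsert_new b ps (fun p hp => by
      obtain ⟨z, r, hzr, hz⟩ := hps p hp
      exact ⟨z, r, hzr, hz b (by simp)⟩),
    foldl_run rest ps b []
      ]
  · simp
  · intro p hp
    obtain ⟨z, r, hzr, hz⟩ := hps p hp
    exact ⟨z, r, hzr, fun a ha => hz a (by simp [ha])⟩
  · exact List.Pairwise.sublist (List.sublist_cons_self b rest) hdesc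
  · exact fun a ha => (List.pairwise_cons.mp hdesc).1 a ha

/-- The minimum of a finset of naturals, as head of its sorted list. -/
def fkey (B : Finset ℕ) : ℕ := ((Finset.sort B (· ≤ ·)).headD 0)

lemma fkey_mem {B : Finset ℕ} (hB : B.Nonempty) : fkey B ∈ B := by
  have h : Finset.sort B (· ≤ ·) ≠ [] := by
    simp [← List.length_pos_iff_ne_nil, Finset.card_pos, hB]
  obtain ⟨x, l, hx⟩ := List.exists_cons_of_ne_nil h
  have : x ∈ Finset.sort B (· ≤ ·) := by simp [hx]
  simpa [fkey, hx] using Finset.mem_sort (α := ℕ) (· ≤ ·) |>.mp this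

lemma fkey_le {B : Finset ℕ} {b : ℕ} (hb : b ∈ B) : fkey B ≤ b := by
  have h : b ∈ Finset.sort B (· ≤ ·) := (Finset.mem_sort _).mpr hb
  obtain ⟨x, l, hx⟩ := List.exists_cons_of_ne_nil (List.ne_nil_of_mem h)
  have hs := Finset.pairwise_sort B (· ≤ ·)
  rw [hx] at hs h
  rcases List.mem_cons.mp h with rfl | hbl
  · simp [fkey, hx]
  · simpa [fkey, hx] using List.rel_of_pairwise_cons hs hbl

lemma sort_pairwise_gt (B : Finset ℕ) :
    (Finset.sort B (· ≤ ·)).reverse.Pairwise (· > ·) := by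
  rw [List.pairwise_reverse]
  have h1 := Finset.pairwise_sort B (· ≤ ·)
  have h2 := Finset.sort_nodup B (· ≤ ·)
  have := List.Pairwise.and h1 h2
  exact this.imp (fun h => lt_of_le_of_ne h.1 h.2)

/-- Processing blocks (each written in decreasing order) builds them as piles. -/
lemma foldl_blocks : ∀ (L : List (Finset ℕ)) (ps : List (List ℕ)),
    (∀ B ∈ L, B.Nonempty) →
    L.Pairwise (fun A B => ∀ b ∈ B, fkey A < b) →
    (∀ p ∈ ps, ∃ z r, p = z :: r ∧ ∀ B ∈ L, ∀ b ∈ B, z < b) →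
    List.foldl (fun ps c => PSinsert c ps)
        ps (L.flatMap fun B => (Finset.sort B (· ≤ ·)).reverse)
      = ps ++ L.map (fun B => Finset.sort B (· ≤ ·))
  | [], ps, _, _, _ => by simp
  | B :: L, ps, hne, hord, hps => by
      have hBne : (Finset.sort B (· ≤ ·)).reverse ≠ [] := by
        simp [← List.length_pos_iff_ne_nil, Finset.card_pos, hne B (by simp)]
      rw [List.flatMap_cons, List.foldl_append,
        foldl_block _ hBne (sort_pairwise_gt B) ps (fun p hp => by
          obtain ⟨z, r, hzr, hz⟩ := hps p hp
          refine ⟨z, r, hzr, fun a ha => ?_⟩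
          exact hz B (by simp) a ((Finset.mem_sort _).mp (List.mem_reverse.mp ha))),
        foldl_blocks L (ps ++ [(Finset.sort B (· ≤ ·)).reverse.reverse])
          (fun C hC => hne C (by simp [hC]))
          ((List.pairwise_cons.mp hord).2)
          (fun p hp => by
            rcases List.mem_append.mp hp with hp | hp
            · obtain ⟨z, r, hzr, hz⟩ := hps p hp
              exact ⟨z, r, hzr, fun C hC b hb => hz C (by simp [hC]) b hb⟩
            · simp only [List.mem_singleton, List.reverse_reverse] at hp
              obtain ⟨x, l, hx⟩ := List.exists_cons_of_ne_nil
                (by simpa using hBne : Finset.sort B (· ≤ ·) ≠ [])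
              refine ⟨x, l, by rw [hp, hx], fun C hC b hb => ?_⟩
              have hx' : x = fkey B := by simp [fkey, hx]
              rw [hx']
              exact (List.pairwise_cons.mp hord).1 C hC b hb)]
      simp

noncomputable def blockList {s : Finset ℕ} (P : Finpartition s) : List (Finset ℕ) :=
  P.parts.toList.mergeSort (fun A B => fkey A ≤ fkey B)

lemma blockList_perm {s : Finset ℕ} (P : Finpartition s) :
    (blockList P).Perm P.parts.toList := List.mergeSort_perm _ _

lemma blockList_toFinset {s : Finset ℕ} (P : Finpartition s) :
    (blockList P).toFinset = P.parts := by
  rw [List.toFinset_eq_of_perm _ _ (blockList_perm P), Finset.toList_toFinset]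

lemma mem_blockList {s : Finset ℕ} {P : Finpartition s} {B : Finset ℕ} :
    B ∈ blockList P ↔ B ∈ P.parts := by
  rw [← blockList_toFinset P, List.mem_toFinset]

lemma blockList_nonempty {s : Finset ℕ} (P : Finpartition s) {B : Finset ℕ}
    (hB : B ∈ blockList P) : B.Nonempty := by
  rw [Finset.nonempty_iff_ne_empty]
  rintro rfl
  exact P.bot_notMem (mem_blockList.mp hB)

lemma blockList_nodup {s : Finset ℕ} (P : Finpartition s) : (blockList P).Nodup :=
  (blockList_perm P).nodup_iff.mpr (Finset.nodup_toList _)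

lemma blockList_strict {s : Finset ℕ} (P : Finpartition s) :
    (blockList P).Pairwise (fun A B => fkey A < fkey B) := by
  have hs : (blockList P).Pairwise (fun A B => fkey A ≤ fkey B) := by
    have := List.pairwise_mergeSort (le := fun A B : Finset ℕ => decide (fkey A ≤ fkey B))
      (by intro a b c hab hbc; simp_all; omega)
      (by intro a b; simp; omega) P.parts.toList
    exact this.imp (by simp_all)
  have hnd := blockList_nodup P
  refine (hs.and hnd).imp_of_mem ?_
  rintro A B hA hB ⟨hle, hne⟩
  rcases lt_or_eq_of_le hle with h | h
  · exact h
  · exfalso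
    have hAp := mem_blockList.mp hA
    have hBp := mem_blockList.mp hB
    have hdisj := P.disjoint hAp hBp hne
    have h1 : fkey A ∈ A := fkey_mem (blockList_nonempty P hA)
    have h2 : fkey A ∈ B := h ▸ fkey_mem (blockList_nonempty P hB)
    exact (Finset.disjoint_left.mp hdisj) h1 h2

/-- The word of a partition: blocks in increasing order of minima, each block decreasing. -/
noncomputable def pword {s : Finset ℕ} (P : Finpartition s) : List ℕ :=
  (blockList P).flatMap (fun B => (Finset.sort B (· ≤ ·)).reverse)

lemma PSpiles_pword {s : Finset ℕ} (P : Finpartition s) :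
    PSpiles (pword P) = (blockList P).map (fun B => Finset.sort B (· ≤ ·)) := by
  unfold PSpiles pword
  rw [foldl_blocks (blockList P) [] (fun B hB => blockList_nonempty P hB)
    ((blockList_strict P).imp (fun {A B} h b hb => lt_of_lt_of_le h (fkey_le hb)))
    (by simp)]
  simp

lemma mem_pword {s : Finset ℕ} (P : Finpartition s) (x : ℕ) :
    x ∈ pword P ↔ x ∈ s := by
  simp only [pword, List.mem_flatMap, List.mem_reverse, Finset.mem_sort]
  constructor
  · rintro ⟨B, hB, hxB⟩
    exact P.le (mem_blockList.mp hB) hxB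
  · intro hx
    obtain ⟨B, hB, hxB⟩ := P.exists_mem hx
    exact ⟨B, mem_blockList.mpr hB, hxB⟩

lemma nodup_pword {s : Finset ℕ} (P : Finpartition s) : (pword P).Nodup := by
  rw [pword, List.nodup_flatMap]
  constructor
  · intro B _; exact List.nodup_reverse.mpr (Finset.sort_nodup _ _)
  · refine (blockList_strict P).imp_of_mem ?_
    rintro A B hA hB hlt
    intro x hxA hxB
    simp only [List.mem_reverse, Finset.mem_sort] at hxA hxB
    have hne : A ≠ B := fun h => lt_irrefl _ (h ▸ hlt)
    have := P.disjoint (mem_blockList.mp hA) (mem_blockList.mp hB) hne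
    exact (Finset.disjoint_left.mp this) hxA hxB

lemma length_pword {s : Finset ℕ} (P : Finpartition s) : (pword P).length = s.card := by
  rw [pword, List.length_flatMap]
  have h1 : ((blockList P).map fun B => ((Finset.sort B (· ≤ ·)).reverse).length).sum
      = ((P.parts.toList).map fun B => ((Finset.sort B (· ≤ ·)).reverse).length).sum :=
    ((blockList_perm P).map _).sum_eq
  simp only [Function.comp_def, List.length_reverse, Finset.length_sort] at h1 ⊢
  rw [h1, Finset.sum_map_toList, Finpartition.sum_card_parts]

lemma exists_perm {n : ℕ} (w : List ℕ) (hlen : w.length = n) (hnd : w.Nodup)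
    (hmem : ∀ x ∈ w, x ∈ Finset.Icc 1 n) : ∃ σ : Equiv.Perm (Fin n), permWord σ = w := by
  subst hlen
  have hget : ∀ i : Fin w.length, w.get i ∈ w := fun i => List.get_mem w i
  have hbound : ∀ i : Fin w.length, w.get i - 1 < w.length := fun i => by
    have := hmem (w.get i) (hget i); rw [Finset.mem_Icc] at this; omega
  have h1 : ∀ i : Fin w.length, 1 ≤ w.get i := fun i => by
    have := hmem (w.get i) (hget i); rw [Finset.mem_Icc] at this; omega
  have hinj : Function.Injective (fun i => (⟨w.get i - 1, hbound i⟩ : Fin w.length)) := by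
    intro i j hij
    simp only [Fin.mk.injEq] at hij
    have hi := h1 i; have hj := h1 j
    have : w.get i = w.get j := by omega
    exact (hnd.get_inj_iff).mp this
  refine ⟨Equiv.ofBijective _ (Finite.injective_iff_bijective.mp hinj), ?_⟩
  unfold permWord
  have key : ∀ i, ((Equiv.ofBijective _ (Finite.injective_iff_bijective.mp hinj)) i : ℕ) + 1
      = w.get i := fun i => by
    show w.get i - 1 + 1 = w.get i
    have := h1 i; omega
  calc List.ofFn (fun i => ((Equiv.ofBijective _ (Finite.injective_iff_bijective.mp hinj)) i : ℕ) + 1)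
      = List.ofFn w.get := by simp only [key]
    _ = w := List.ofFn_get w

lemma mem_permWord {n : ℕ} (σ : Equiv.Perm (Fin n)) (x : ℕ) :
    x ∈ permWord σ ↔ x ∈ Finset.Icc 1 n := by
  simp only [permWord, List.mem_ofFn, Set.mem_range, Finset.mem_Icc]
  constructor
  · rintro ⟨i, rfl⟩; have := (σ i).isLt; omega
  · rintro ⟨hx1, hx2⟩
    refine ⟨σ.symm ⟨x - 1, by omega⟩, ?_⟩
    rw [Equiv.apply_symm_apply]
    simp; omega

lemma nodup_permWord {n : ℕ} (σ : Equiv.Perm (Fin n)) : (permWord σ).Nodup := by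
  rw [permWord, List.nodup_ofFn]
  intro i j h
  simp only [add_left_inj] at h
  exact σ.injective (Fin.val_injective h)

lemma length_permWord {n : ℕ} (σ : Equiv.Perm (Fin n)) : (permWord σ).length = n := by
  simp [permWord]

/-- Invariant: all piles nonempty and increasing, with strictly increasing tops. -/
def Good (ps : List (List ℕ)) : Prop :=
  (∀ p ∈ ps, p ≠ [] ∧ p.Pairwise (· < ·)) ∧
    (ps.map (fun p => p.headD 0)).Pairwise (· < ·)

lemma Good.tail {q : List ℕ} {ps : List (List ℕ)} (h : Good (q :: ps)) : Good ps :=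
  ⟨fun p hp => h.1 p (by simp [hp]), (List.pairwise_cons.mp h.2).2⟩

lemma PSinsert_step (c : ℕ) : ∀ ps : List (List ℕ), Good ps → c ∉ ps.flatMap id →
    Good (PSinsert c ps) ∧
    (∀ h ∈ (PSinsert c ps).map (fun p => p.headD 0),
        h = c ∨ h ∈ ps.map (fun p => p.headD 0)) ∧
    ((PSinsert c ps).flatMap id).Perm (c :: ps.flatMap id)
  | [], _, _ => by
      refine ⟨⟨by simp [PSinsert], by simp [PSinsert]⟩, by simp [PSinsert], by simp [PSinsert]⟩
  | [] :: ps, hG, _ => absurd rfl (hG.1 [] (by simp)).1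
  | (x :: p) :: ps, hG, hc => by
      have hxp := hG.1 (x :: p) (by simp)
      by_cases hcx : c < x
      · rw [PSinsert, if_pos hcx]
        refine ⟨⟨?_, ?_⟩, ?_, by simp⟩
        · intro q hq
          rcases List.mem_cons.mp hq with rfl | hq
          · refine ⟨by simp, List.pairwise_cons.mpr ⟨?_, hxp.2⟩⟩
            intro b hb
            rcases List.mem_cons.mp hb with rfl | hb
            · exact hcx
            · exact hcx.trans ((List.pairwise_cons.mp hxp.2).1 b hb)
          · exact hG.1 q (by simp [hq])
        · simp only [List.map_cons, List.headD_cons]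
          have h2 := hG.2
          simp only [List.map_cons, List.headD_cons] at h2
          refine List.pairwise_cons.mpr ⟨?_, (List.pairwise_cons.mp h2).2⟩
          intro b hb
          exact hcx.trans ((List.pairwise_cons.mp h2).1 b hb)
        · intro h hh
          simp only [List.map_cons, List.headD_cons, List.mem_cons] at hh ⊢
          tauto
      · have hxc : x < c := by
          have : c ≠ x := fun h => hc (by simp [h])
          omega
        rw [PSinsert, if_neg hcx]
        have hc' : c ∉ ps.flatMap id := fun h => hc (by simp at h ⊢; tauto)
        obtain ⟨ihG, ihH, ihP⟩ := PSinsert_step c ps hG.tail hc'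
        refine ⟨⟨?_, ?_⟩, ?_, ?_⟩
        · intro q hq
          rcases List.mem_cons.mp hq with rfl | hq
          · exact hxp
          · exact ihG.1 q hq
        · simp only [List.map_cons, List.headD_cons]
          refine List.pairwise_cons.mpr ⟨?_, ihG.2⟩
          intro b hb
          rcases ihH b hb with rfl | hb
          · exact hxc
          · have h2 := hG.2
            simp only [List.map_cons, List.headD_cons] at h2
            exact (List.pairwise_cons.mp h2).1 b hb
        · intro h hh
          simp only [List.map_cons, List.headD_cons, List.mem_cons] at hh
          rcases hh with rfl | hh
          · right; simp
          · rcases ihH h hh with rfl | hh'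
            · left; rfl
            · right; simp only [List.map_cons, List.headD_cons]
              exact List.mem_cons_of_mem _ hh'
        · simp only [List.flatMap_cons, id]
          exact (ihP.append_left (x :: p)).trans List.perm_middle

lemma foldl_good : ∀ (w : List ℕ) (ps : List (List ℕ)), Good ps → w.Nodup →
    (∀ c ∈ w, c ∉ ps.flatMap id) →
    Good (List.foldl (fun ps c => PSinsert c ps) ps w) ∧
    ((List.foldl (fun ps c => PSinsert c ps) ps w).flatMap id).Perm (w ++ ps.flatMap id)
  | [], ps, hG, _, _ => ⟨hG, by simp⟩
  | c :: w, ps, hG, hnd, hw => by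
      obtain ⟨sG, -, sP⟩ := PSinsert_step c ps hG (hw c (by simp))
      have hw' : ∀ c' ∈ w, c' ∉ (PSinsert c ps).flatMap id := by
        intro c' hc' hmem
        rcases List.mem_cons.mp (sP.mem_iff.mp hmem) with rfl | h
        · exact (List.nodup_cons.mp hnd).1 hc'
        · exact hw c' (by simp [hc']) h
      obtain ⟨fG, fP⟩ := foldl_good w (PSinsert c ps) sG (List.nodup_cons.mp hnd).2 hw'
      refine ⟨by simpa using fG, ?_⟩
      rw [List.foldl_cons]
      exact fP.trans ((sP.append_left w).trans List.perm_middle)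

lemma PSpiles_good (w : List ℕ) (hnd : w.Nodup) :
    Good (PSpiles w) ∧ ((PSpiles w).flatMap id).Perm w := by
  obtain ⟨h1, h2⟩ := foldl_good w [] ⟨by simp, by simp⟩ hnd (by simp)
  exact ⟨h1, by simpa [PSpiles] using h2⟩

lemma sort_toFinset_self (p : List ℕ) (hp : p.Pairwise (· < ·)) :
    Finset.sort p.toFinset (· ≤ ·) = p := by
  have hnd : p.Nodup := hp.imp ne_of_lt
  have hperm : (Finset.sort p.toFinset (· ≤ ·)).Perm p :=
    List.perm_of_nodup_nodup_toFinset_eq (Finset.sort_nodup _ _) hnd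
      (Finset.sort_toFinset _ _)
  exact hperm.eq_of_pairwise' (Finset.pairwise_sort _ _) (hp.imp le_of_lt)

lemma fkey_toFinset (p : List ℕ) (hp : p.Pairwise (· < ·)) :
    fkey p.toFinset = p.headD 0 := by
  rw [fkey, sort_toFinset_self p hp]

/-- Canonical-form: a Good pile configuration is determined by its set of piles. -/
lemma good_canonical {R : List (List ℕ)} (hR : Good R) :
    R = (R.map List.toFinset).map (fun B => Finset.sort B (· ≤ ·)) ∧
    (R.map List.toFinset).Pairwise (fun A B => fkey A < fkey B) := by
  constructor
  · rw [List.map_map]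
    conv_lhs => rw [← List.map_id R]
    refine List.map_congr_left ?_ |>.symm
    intro p hp
    exact (sort_toFinset_self p (hR.1 p hp).2).trans rfl
  · rw [List.pairwise_map]
    have h2 : R.Pairwise (fun p q => p.headD 0 < q.headD 0) := List.pairwise_map.mp hR.2
    refine h2.imp_of_mem ?_
    intro p q hp hq h
    rw [fkey_toFinset p (hR.1 p hp).2, fkey_toFinset q (hR.1 q hq).2]
    exact h

lemma strict_fkey_unique {L L' : List (Finset ℕ)}
    (h : L.Pairwise (fun A B => fkey A < fkey B))
    (h' : L'.Pairwise (fun A B => fkey A < fkey B))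
    (hfin : L.toFinset = L'.toFinset) : L = L' := by
  haveI : IsAntisymm (Finset ℕ) (fun A B => fkey A < fkey B) :=
    ⟨fun a b hab hba => absurd (hab.trans hba) (lt_irrefl _)⟩
  have hnd : L.Nodup := (h.imp (fun {a b} hab => fun he => absurd (he ▸ hab) (lt_irrefl _)))
  have hnd' : L'.Nodup := (h'.imp (fun {a b} hab => fun he => absurd (he ▸ hab) (lt_irrefl _)))
  exact List.Perm.eq_of_pairwise' h h'
    (List.perm_of_nodup_nodup_toFinset_eq hnd hnd' hfin)

lemma pile_elems_perm {n : ℕ} (σ : Equiv.Perm (Fin n)) :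
    ((PSpiles (permWord σ)).flatMap id).Perm (permWord σ) :=
  (PSpiles_good _ (nodup_permWord σ)).2

lemma pile_good {n : ℕ} (σ : Equiv.Perm (Fin n)) : Good (PSpiles (permWord σ)) :=
  (PSpiles_good _ (nodup_permWord σ)).1

/-- The partition of `{1,…,n}` given by the piles of `R(σ)`. -/
noncomputable def pilePartition {n : ℕ} (σ : Equiv.Perm (Fin n)) :
    Finpartition (Finset.Icc 1 n : Finset ℕ) where
  parts := ((PSpiles (permWord σ)).map List.toFinset).toFinset
  supIndep := by
    rw [Finset.supIndep_iff_pairwiseDisjoint]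
    intro A hA B hB hAB
    simp only [Finset.mem_coe, List.mem_toFinset, List.mem_map] at hA hB
    obtain ⟨p, hp, rfl⟩ := hA
    obtain ⟨q, hq, rfl⟩ := hB
    have hndf : ((PSpiles (permWord σ)).flatMap id).Nodup :=
      (pile_elems_perm σ).nodup_iff.mpr (nodup_permWord σ)
    have hpair := (List.nodup_flatMap.mp hndf).2
    have hsym : Symmetric (Function.onFun List.Disjoint (id : List ℕ → List ℕ)) :=
      fun a b h x hxb hxa => h hxa hxb
    have hne : p ≠ q := fun h => hAB (by rw [h])
    have hdisj : List.Disjoint p q := (haveI : Std.Symm (Function.onFun List.Disjoint (id : List ℕ → List ℕ)) := ⟨hsym⟩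
      List.Pairwise.forall hpair hp hq hne)
    exact Finset.disjoint_left.mpr fun x hxp hxq =>
      hdisj (List.mem_toFinset.mp hxp) (List.mem_toFinset.mp hxq)
  sup_parts := by
    ext x
    rw [Finset.mem_sup, ← mem_permWord σ x, ← (pile_elems_perm σ).mem_iff]
    simp only [List.mem_toFinset, List.mem_map, List.mem_flatMap, id]
    constructor
    · rintro ⟨B, ⟨p, hp, rfl⟩, hxB⟩
      exact ⟨p, hp, List.mem_toFinset.mp hxB⟩
    · rintro ⟨p, hp, hxp⟩
      exact ⟨p.toFinset, ⟨p, hp, rfl⟩, List.mem_toFinset.mpr hxp⟩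
  bot_notMem := by
    simp only [Finset.bot_eq_empty, List.mem_toFinset, List.mem_map]
    rintro ⟨p, hp, hpe⟩
    exact ((pile_good σ).1 p hp).1 (List.toFinset_eq_empty_iff p |>.mp hpe)

lemma exists_sigma {n : ℕ} (P : Finpartition (Finset.Icc 1 n : Finset ℕ)) :
    ∃ σ : Equiv.Perm (Fin n),
      PSpiles (permWord σ) = (blockList P).map (fun B => Finset.sort B (· ≤ ·)) := by
  obtain ⟨σ, hσ⟩ := exists_perm (pword P)
    (by rw [length_pword, Nat.card_Icc]; omega) (nodup_pword P)
    (fun x hx => (mem_pword P x).mp hx)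
  exact ⟨σ, by rw [hσ, PSpiles_pword]⟩

lemma map_toFinset_sort (L : List (Finset ℕ)) :
    (L.map (fun B => Finset.sort B (· ≤ ·))).map List.toFinset = L := by
  rw [List.map_map]
  conv_rhs => rw [← List.map_id L]
  exact List.map_congr_left fun B _ => Finset.sort_toFinset _ _

lemma canonical_eq {n : ℕ} (σ : Equiv.Perm (Fin n)) :
    PSpiles (permWord σ)
      = (blockList (pilePartition σ)).map (fun B => Finset.sort B (· ≤ ·)) := by
  obtain ⟨hcanon, hstrict⟩ := good_canonical (pile_good σ)
  have hbl : blockList (pilePartition σ) = (PSpiles (permWord σ)).map List.toFinset :=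
    strict_fkey_unique (blockList_strict _) hstrict (by rw [blockList_toFinset]; rfl)
  rw [hbl, ← hcanon]


/-- Every set partition of `{1,…,n}` arises as the set of piles of the
Patience Sorting pile configuration of some permutation; consequently, the number of
distinct pile configurations `R(σ)` as `σ` ranges over `S_n` equals the `n`-th Bell
number, i.e., the number of set partitions of `{1,…,n}`. -/
theorem stmt16 (n : ℕ) :
    (∀ P : Finpartition (Finset.Icc 1 n : Finset ℕ),
      ∃ σ : Equiv.Perm (Fin n),
        ((PSpiles (permWord σ)).map List.toFinset).toFinset = P.parts) ∧
    Nat.card {R : List (List ℕ) // ∃ σ : Equiv.Perm (Fin n), PSpiles (permWord σ) = R} =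
      Nat.card (Finpartition (Finset.Icc 1 n : Finset ℕ)) := by

  constructor
  · intro P
    obtain ⟨σ, hσ⟩ := exists_sigma P
    refine ⟨σ, ?_⟩
    rw [hσ, map_toFinset_sort, blockList_toFinset]
  · refine (Nat.card_eq_of_bijective
      (fun P => (⟨(blockList P).map (fun B => Finset.sort B (· ≤ ·)), exists_sigma P⟩ :
        {R : List (List ℕ) // ∃ σ : Equiv.Perm (Fin n), PSpiles (permWord σ) = R}))
      ⟨?_, ?_⟩).symm
    · intro P P' h
      have h1 : (blockList P).map (fun B => Finset.sort B (· ≤ ·))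
          = (blockList P').map (fun B => Finset.sort B (· ≤ ·)) := congrArg Subtype.val h
      have h2 : blockList P = blockList P' := by
        rw [← map_toFinset_sort (blockList P), h1, map_toFinset_sort]
      refine Finpartition.ext ?_
      rw [← blockList_toFinset P, ← blockList_toFinset P', h2]
    · rintro ⟨R, σ, rfl⟩
      exact ⟨pilePartition σ, Subtype.ext (canonical_eq σ).symm⟩
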